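/- The group Γ₃ = ⟨s, t | s t s t² s t s = t² s t s t²⟩ contains a copy of ℤ²: the subgroup of Γ₃ generated by the two elements s t s and t² s t s t² s t s t² s t s is isomorphic to ℤ × ℤ. -/

import Mathlib

open Matrix

/-- The relator `s t s t² s t s (t² s t s t²)⁻¹` (i.e. the relation
`s t s t² s t s = t² s t s t²`) in the free group on generators `s = of 0`, `t = of 1`. -/
def rel3 : FreeGroup (Fin 2) :=
  (FreeGroup.of 0) * (FreeGroup.of 1) * (FreeGroup.of 0) * (FreeGroup.of 1) ^ 2 *
    (FreeGroup.of 0) * (FreeGroup.of 1) * (FreeGroup.of 0) *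
    ((FreeGroup.of 1) ^ 2 * (FreeGroup.of 0) * (FreeGroup.of 1) * (FreeGroup.of 0) *
      (FreeGroup.of 1) ^ 2)⁻¹

/-- The group `Γ₃ = ⟨s, t ∣ s t s t² s t s = t² s t s t²⟩`. -/
def Gamma3 := PresentedGroup ({rel3} : Set (FreeGroup (Fin 2)))

instance : Group Gamma3 := by unfold Gamma3; infer_instance

/-- The generator `s` of `Γ₃`. -/
def sG : Gamma3 := PresentedGroup.of 0

/-- The generator `t` of `Γ₃`. -/
def tG : Gamma3 := PresentedGroup.of 1

/-! ### Auxiliary material -/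

lemma gamma3_rel : sG * tG * sG * tG ^ 2 * sG * tG * sG = tG ^ 2 * sG * tG * sG * tG ^ 2 := by
  have h : (PresentedGroup.mk ({rel3} : Set (FreeGroup (Fin 2))) rel3 : Gamma3) = 1 :=
    (QuotientGroup.eq_one_iff _).2 (Subgroup.subset_normalClosure (Set.mem_singleton _))
  rw [rel3] at h
  simp only [_root_.map_mul, _root_.map_pow, _root_.map_inv] at h
  rw [mul_inv_eq_one] at h
  exact h

/-- `a = s t s`. -/
def aG : Gamma3 := sG * tG * sG
/-- `u = t ^ 2`. -/
def uG : Gamma3 := tG ^ 2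
/-- `b = u a u a u a`. -/
def bG : Gamma3 := uG * aG * uG * aG * uG * aG

lemma rel_aua : aG * uG * aG = uG * aG * uG := by
  simpa [aG, uG, mul_assoc] using gamma3_rel

lemma rel_aua' : ∀ x : Gamma3, aG * (uG * (aG * x)) = uG * (aG * (uG * x)) := by
  intro x
  have h := rel_aua
  calc aG * (uG * (aG * x)) = (aG * uG * aG) * x := by group
    _ = (uG * aG * uG) * x := by rw [h]
    _ = uG * (aG * (uG * x)) := by group

lemma comm_ab : Commute aG bG := by
  unfold Commute SemiconjBy bG
  simp only [mul_assoc]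
  rw [rel_aua', rel_aua' aG]

/-! ### A linear representation of `Γ₃` -/

abbrev GL2 := GL (Fin 2) ℚ

def Su : GL2 := ⟨!![0,2;-1,0], !![0,-1;1/2,0],
  by rw [Matrix.one_fin_two]; norm_num [Matrix.mul_fin_two],
  by rw [Matrix.one_fin_two]; norm_num [Matrix.mul_fin_two]⟩
def Tu : GL2 := ⟨!![-2,0;1,-2], !![-1/2,0;-1/4,-1/2],
  by rw [Matrix.one_fin_two]; norm_num [Matrix.mul_fin_two],
  by rw [Matrix.one_fin_two]; norm_num [Matrix.mul_fin_two]⟩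
def Au : GL2 := ⟨!![4,4;0,4], !![1/4,-1/4;0,1/4],
  by rw [Matrix.one_fin_two]; norm_num [Matrix.mul_fin_two],
  by rw [Matrix.one_fin_two]; norm_num [Matrix.mul_fin_two]⟩
def Bu : GL2 := ⟨!![-4096,0;0,-4096], !![-1/4096,0;0,-1/4096],
  by rw [Matrix.one_fin_two]; norm_num [Matrix.mul_fin_two],
  by rw [Matrix.one_fin_two]; norm_num [Matrix.mul_fin_two]⟩

def fGL : Fin 2 → GL2 := ![Su, Tu]

lemma hrelf : ∀ r ∈ ({rel3} : Set (FreeGroup (Fin 2))), FreeGroup.lift fGL r = 1 := by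
  intro r hr
  rw [Set.mem_singleton_iff] at hr
  subst hr
  rw [rel3]
  simp only [_root_.map_mul, _root_.map_pow, _root_.map_inv, FreeGroup.lift_apply_of]
  rw [mul_inv_eq_one]
  apply Units.ext
  show (fGL 0).val * (fGL 1).val * (fGL 0).val * ((fGL 1)^2).val * (fGL 0).val * (fGL 1).val *
    (fGL 0).val = ((fGL 1)^2).val * (fGL 0).val * (fGL 1).val * (fGL 0).val * ((fGL 1)^2).val
  norm_num [fGL, Su, Tu, Units.val_pow_eq_pow_val, pow_two, Matrix.mul_fin_two]

/-- The representation `Γ₃ → GL₂(ℚ)`. -/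
def Phi : Gamma3 →* GL2 := PresentedGroup.toGroup hrelf

lemma Phi_s : Phi sG = Su :=
  PresentedGroup.toGroup.of hrelf

lemma Phi_t : Phi tG = Tu :=
  PresentedGroup.toGroup.of hrelf

lemma Phi_a : Phi aG = Au := by
  rw [aG, _root_.map_mul, _root_.map_mul, Phi_s, Phi_t]
  apply Units.ext
  show Su.val * Tu.val * Su.val = Au.val
  norm_num [Su, Tu, Au, Matrix.mul_fin_two]

lemma Phi_u : Phi uG = Tu ^ 2 := by
  rw [uG, _root_.map_pow, Phi_t]

lemma Phi_b : Phi bG = Bu := by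
  rw [bG, _root_.map_mul, _root_.map_mul, _root_.map_mul, _root_.map_mul, _root_.map_mul,
    Phi_a, Phi_u]
  apply Units.ext
  show (Tu^2).val * Au.val * (Tu^2).val * Au.val * (Tu^2).val * Au.val = Bu.val
  norm_num [Tu, Au, Bu, Units.val_pow_eq_pow_val, pow_two, Matrix.mul_fin_two]

lemma hApow : ∀ m : ℤ, ((Au ^ m : GL2) : Matrix (Fin 2) (Fin 2) ℚ)
    = !![(4:ℚ)^m, (4:ℚ)^m * m; 0, (4:ℚ)^m] := by
  have h4 : (4:ℚ) ≠ 0 := by norm_num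
  have hinv : ((Au⁻¹ : GL2) : Matrix (Fin 2) (Fin 2) ℚ) = !![1/4,-1/4;0,1/4] := rfl
  intro m
  induction m using Int.induction_on with
  | zero => simp [Matrix.one_fin_two]
  | succ k ih =>
      rw [_root_.zpow_add_one, Units.val_mul, ih]
      show _ * (!![4,4;0,4] : Matrix (Fin 2) (Fin 2) ℚ) = _
      rw [Matrix.mul_fin_two, zpow_add_one₀ h4]
      push_cast
      congr 1
      ring_nf
  | pred k ih =>
      rw [_root_.zpow_sub_one, Units.val_mul, ih, hinv]
      rw [Matrix.mul_fin_two, zpow_sub_one₀ h4]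
      push_cast
      congr 1
      ring_nf

lemma hBpow : ∀ n : ℤ, ((Bu ^ n : GL2) : Matrix (Fin 2) (Fin 2) ℚ)
    = !![(-4096:ℚ)^n, 0; 0, (-4096:ℚ)^n] := by
  have h4 : (-4096:ℚ) ≠ 0 := by norm_num
  have hinv : ((Bu⁻¹ : GL2) : Matrix (Fin 2) (Fin 2) ℚ) = !![-1/4096,0;0,-1/4096] := rfl
  intro n
  induction n using Int.induction_on with
  | zero => simp [Matrix.one_fin_two]
  | succ k ih =>
      rw [_root_.zpow_add_one, Units.val_mul, ih]
      show _ * (!![-4096,0;0,-4096] : Matrix (Fin 2) (Fin 2) ℚ) = _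
      rw [Matrix.mul_fin_two, zpow_add_one₀ h4]
      congr 1
      ring_nf
  | pred k ih =>
      rw [_root_.zpow_sub_one, Units.val_mul, ih, hinv]
      rw [Matrix.mul_fin_two, zpow_sub_one₀ h4]
      congr 1
      ring_nf

lemma key (m n : ℤ) (h : Au ^ m * Bu ^ n = 1) : m = 0 ∧ n = 0 := by
  have hval : ((Au ^ m : GL2) : Matrix (Fin 2) (Fin 2) ℚ) *
      ((Bu ^ n : GL2) : Matrix (Fin 2) (Fin 2) ℚ) = 1 := by
    rw [← Units.val_mul, h, Units.val_one]
  rw [hApow, hBpow, Matrix.mul_fin_two, Matrix.one_fin_two] at hval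
  have h4 : (4:ℚ) ≠ 0 := by norm_num
  have h4096 : (-4096:ℚ) ≠ 0 := by norm_num
  have h01 : (4:ℚ)^m * (m:ℚ) * (-4096:ℚ)^n = 0 := by
    have := congrFun (congrFun hval 0) 1; simpa using this
  have h00 : (4:ℚ)^m * (-4096:ℚ)^n = 1 := by
    have := congrFun (congrFun hval 0) 0; simpa using this
  have hm : (m:ℚ) = 0 := by
    rcases mul_eq_zero.1 h01 with hl | hr
    · rcases mul_eq_zero.1 hl with h | h
      · exact absurd h (zpow_ne_zero m h4)
      · exact h
    · exact absurd hr (zpow_ne_zero n h4096)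
  have hm0 : m = 0 := by exact_mod_cast hm
  subst hm0
  refine ⟨rfl, ?_⟩
  rw [zpow_zero, one_mul] at h00
  have hsq : ((16777216:ℚ))^n = 1 := by
    rw [show (16777216:ℚ) = (-4096:ℚ)^(2:ℤ) by norm_num, ← _root_.zpow_mul, mul_comm,
      _root_.zpow_mul, h00, _root_.one_zpow]
  have hinj := zpow_right_injective₀ (a := (16777216:ℚ)) (by norm_num) (by norm_num)
  have h0 : (16777216:ℚ)^n = (16777216:ℚ)^(0:ℤ) := by simpa using hsq
  exact hinj h0

/-- The homomorphism `ℤ × ℤ → Γ₃`, `(m, n) ↦ a^m b^n`. -/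
def psi : Multiplicative ℤ × Multiplicative ℤ →* Gamma3 :=
  MonoidHom.noncommCoprod (zpowersHom Gamma3 aG) (zpowersHom Gamma3 bG)
    (fun m n => Commute.zpow_zpow comm_ab m.toAdd n.toAdd)

lemma psi_apply (m n : Multiplicative ℤ) : psi (m, n) = aG ^ m.toAdd * bG ^ n.toAdd := rfl

lemma psi_injective : Function.Injective psi := by
  rw [injective_iff_map_eq_one]
  rintro ⟨m, n⟩ h
  rw [psi_apply] at h
  have hGL : Au ^ m.toAdd * Bu ^ n.toAdd = 1 := by
    have := congrArg Phi h
    rwa [_root_.map_mul, map_zpow, map_zpow, Phi_a, Phi_b, _root_.map_one] at this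
  obtain ⟨hm, hn⟩ := key _ _ hGL
  have : m = 1 ∧ n = 1 := ⟨by simpa using congrArg Multiplicative.ofAdd hm,
    by simpa using congrArg Multiplicative.ofAdd hn⟩
  simp [Prod.ext_iff, this.1, this.2]

lemma psi_range : psi.range = Subgroup.closure ({aG, bG} : Set Gamma3) := by
  apply le_antisymm
  · rintro x ⟨⟨m, n⟩, rfl⟩
    rw [psi_apply]
    exact mul_mem (zpow_mem (Subgroup.subset_closure (by simp)) _)
      (zpow_mem (Subgroup.subset_closure (by simp)) _)
  · rw [Subgroup.closure_le]
    rintro x hx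
    rcases hx with rfl | hx
    · exact ⟨(Multiplicative.ofAdd 1, Multiplicative.ofAdd 0), by simp [psi_apply]⟩
    · rw [Set.mem_singleton_iff] at hx
      subst hx
      exact ⟨(Multiplicative.ofAdd 0, Multiplicative.ofAdd 1), by simp [psi_apply]⟩

/-- `Γ₃` contains a copy of `ℤ²`: the subgroup generated by `s t s` and
`t² s t s t² s t s t² s t s` is isomorphic to `ℤ × ℤ` (written multiplicatively). -/
theorem Gamma3_contains_Z2 :
    Nonempty ((Subgroup.closure
        ({sG * tG * sG,
          tG ^ 2 * (sG * tG * sG) * tG ^ 2 * (sG * tG * sG) * tG ^ 2 * (sG * tG * sG)} :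
          Set Gamma3)) ≃* Multiplicative ℤ × Multiplicative ℤ) := by
  have hset : ({sG * tG * sG,
      tG ^ 2 * (sG * tG * sG) * tG ^ 2 * (sG * tG * sG) * tG ^ 2 * (sG * tG * sG)} :
      Set Gamma3) = ({aG, bG} : Set Gamma3) := rfl
  rw [hset, ← psi_range]
  exact ⟨((MonoidHom.ofInjective psi_injective).symm.trans (by rfl)).symm.symm⟩
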